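/- Let ρ0 be a positive definite density matrix on ℂ^d, ρ̄ a density matrix on ℂ^d, q ≥ 1, and for j ∈ {1,…,q} let ρ(j) := ρ0^{⊗(j−1)} ⊗ ρ̄ ⊗ ρ0^{⊗(q−j)}. Then D( (1/q)·∑_{j=1}^q ρ(j) ‖ ρ0^{⊗q} ) ≤ (1/q)·( tr(ρ̄²·ρ0⁻¹) − 1 ); moreover, if λ_min(ρ0) ≥ λ̃ for some λ̃ > 0, then D( (1/q)·∑_{j=1}^q ρ(j) ‖ ρ0^{⊗q} ) ≤ (1/q)·( d/λ̃ − 1 ). -/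

import Mathlib

open Matrix BigOperators Finset
open scoped ComplexOrder

namespace Covert

noncomputable section

/-- Trace norm: sum of singular values of `X`, i.e. `tr √(Xᴴ X)`. -/
def traceNorm {n : Type*} [Fintype n] [DecidableEq n] (X : Matrix n n ℂ) : ℝ :=
  ∑ i, Real.sqrt ((Matrix.isHermitian_conjTranspose_mul_self X).eigenvalues i)

/-- Frobenius norm `√(tr (Xᴴ X))`. -/
def frobeniusNorm {n : Type*} [Fintype n] [DecidableEq n] (X : Matrix n n ℂ) : ℝ :=
  Real.sqrt ((Matrix.trace (Xᴴ * X)).re)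

/-- smallest eigenvalue of a Hermitian matrix -/
def eigMin {n : Type*} [Fintype n] [DecidableEq n] {A : Matrix n n ℂ}
    (hA : A.IsHermitian) : ℝ := ⨅ i, hA.eigenvalues i

/-- largest eigenvalue of a Hermitian matrix -/
def eigMax {n : Type*} [Fintype n] [DecidableEq n] {A : Matrix n n ℂ}
    (hA : A.IsHermitian) : ℝ := ⨆ i, hA.eigenvalues i

/-- largest singular value -/
def sigmaMax {n : Type*} [Fintype n] [DecidableEq n] (X : Matrix n n ℂ) : ℝ :=
  ⨆ i, Real.sqrt ((Matrix.isHermitian_conjTranspose_mul_self X).eigenvalues i)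

/-- functional calculus `f(A)` for a Hermitian matrix `A`, extended by `0` junk value. -/
def matFun {n : Type*} [Fintype n] [DecidableEq n] (f : ℝ → ℝ) (A : Matrix n n ℂ) :
    Matrix n n ℂ :=
  if hA : A.IsHermitian then hA.cfc f else 0

/-- matrix logarithm via functional calculus, with the convention `log 0 = 0`. -/
def matLog {n : Type*} [Fintype n] [DecidableEq n] (A : Matrix n n ℂ) : Matrix n n ℂ :=
  matFun Real.log A

/-- matrix real power via functional calculus (`0 ^ a = 0` for `a ≠ 0`). -/
def matPow {n : Type*} [Fintype n] [DecidableEq n] (A : Matrix n n ℂ) (a : ℝ) : Matrix n n ℂ :=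
  matFun (fun x => x ^ a) A

/-- von Neumann entropy `H(ρ) = -tr(ρ log ρ)`. -/
def vnEntropy {n : Type*} [Fintype n] [DecidableEq n] (ρ : Matrix n n ℂ) : ℝ :=
  -((ρ * matLog ρ).trace).re

/-- quantum relative entropy `D(ρ‖σ) = tr(ρ (log ρ - log σ))`. -/
def qRelEntropy {n : Type*} [Fintype n] [DecidableEq n] (ρ σ : Matrix n n ℂ) : ℝ :=
  ((ρ * (matLog ρ - matLog σ)).trace).re

/-- a density matrix: positive semidefinite with unit trace. -/
def IsDensity {n : Type*} [Fintype n] [DecidableEq n] (ρ : Matrix n n ℂ) : Prop :=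
  ρ.PosSemidef ∧ ρ.trace = 1

end

end Covert

open Covert

/-- Kronecker/tensor product of a family of `d × d` matrices, indexed by tuples. -/
noncomputable def tensorFam {q d : ℕ} (A : Fin q → Matrix (Fin d) (Fin d) ℂ) :
    Matrix (Fin q → Fin d) (Fin q → Fin d) ℂ :=
  Matrix.of fun i j => ∏ t, A t (i t) (j t)


-- ===================== auxiliary lemmas =====================

noncomputable section AuxKlein
variable {n : Type*} [Fintype n] [DecidableEq n]

lemma aux_conj_mul_conj (U A B : Matrix n n ℂ) (hU : star U * U = 1) :
    (U * A * star U) * (U * B * star U) = U * (A * B) * star U := by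
  simp only [Matrix.mul_assoc]
  rw [← Matrix.mul_assoc (star U) U (B * star U), hU, Matrix.one_mul]

lemma aux_trace_conj (U A : Matrix n n ℂ) (hU : star U * U = 1) :
    (U * A * star U).trace = A.trace := by
  rw [Matrix.trace_mul_comm, ← Matrix.mul_assoc, hU, Matrix.one_mul]

lemma aux_trace_DND (a b : n → ℂ) (N : Matrix n n ℂ) :
    (diagonal a * N * diagonal b * Nᴴ).trace
      = ∑ i, ∑ j, a i * b j * (N i j * star (N i j)) := by
  have h : ∀ i j, (diagonal a * N * diagonal b) i j = a i * N i j * b j := fun i j => by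
    rw [Matrix.mul_diagonal, Matrix.diagonal_mul]
  simp only [Matrix.trace, Matrix.diag_apply]
  refine Finset.sum_congr rfl fun i _ => ?_
  rw [Matrix.mul_apply]
  refine Finset.sum_congr rfl fun j _ => ?_
  rw [h, Matrix.conjTranspose_apply]
  ring

omit [DecidableEq n] in
lemma aux_trace_conj_mul_conj (U V A B : Matrix n n ℂ) :
    ((U * A * star U) * (V * B * star V)).trace
      = (A * (star U * V) * B * (star V * U)).trace := by
  calc ((U * A * star U) * (V * B * star V)).trace
      = (U * (A * star U * (V * B * star V))).trace := by simp only [Matrix.mul_assoc]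
    _ = ((A * star U * (V * B * star V)) * U).trace := Matrix.trace_mul_comm _ _
    _ = (A * (star U * V) * B * (star V * U)).trace := by simp only [Matrix.mul_assoc]

omit [DecidableEq n] in
lemma aux_trace_mul_conjdiag (W R D : Matrix n n ℂ) :
    (R * (W * D * star W)).trace = ((star W * R * W) * D).trace := by
  calc (R * (W * D * star W)).trace
      = ((W * D * star W) * R).trace := Matrix.trace_mul_comm _ _
    _ = (W * (D * (star W * R))).trace := by simp only [Matrix.mul_assoc]
    _ = ((D * (star W * R)) * W).trace := Matrix.trace_mul_comm _ _
    _ = (D * (star W * R * W)).trace := by simp only [Matrix.mul_assoc]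
    _ = ((star W * R * W) * D).trace := Matrix.trace_mul_comm _ _

lemma aux_rc_ofReal : (RCLike.ofReal : ℝ → ℂ) = Complex.ofReal := rfl

lemma aux_matLog_eq {A : Matrix n n ℂ} (hA : A.IsHermitian) :
    matLog A = (hA.eigenvectorUnitary : Matrix n n ℂ)
      * diagonal (RCLike.ofReal ∘ Real.log ∘ hA.eigenvalues)
      * (star hA.eigenvectorUnitary : Matrix n n ℂ) := by
  rw [matLog, matFun, dif_pos hA]
  rfl

omit [DecidableEq n] in
lemma aux_trace_mul_of_eq {A B A' B' : Matrix n n ℂ} (hA : A = A') (hB : B = B') :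
    (A * B).trace = (A' * B').trace := by rw [hA, hB]

omit [DecidableEq n] in
lemma aux_trace_mul3_of_eq {A C A' C' : Matrix n n ℂ} (hA : A = A') (hC : C = C') :
    (A * A * C).trace = (A' * A' * C').trace := by rw [hA, hC]

lemma aux_posDef_of_mul_eq_one {M N : Matrix n n ℂ} (hM : M.PosSemidef) (h : M * N = 1) :
    M.PosDef := by
  refine Matrix.PosDef.of_dotProduct_mulVec_pos hM.1 fun x hx => ?_
  have hMN : N * M = 1 := mul_eq_one_comm.mp h
  have hMx : M *ᵥ x ≠ 0 := by
    intro h0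
    apply hx
    have hx' : N *ᵥ (M *ᵥ x) = x := by
      rw [Matrix.mulVec_mulVec, hMN, Matrix.one_mulVec]
    rw [← hx', h0, Matrix.mulVec_zero]
  have h1 := hM.dotProduct_mulVec_nonneg x
  have h2 : star x ⬝ᵥ M *ᵥ x ≠ 0 := fun hc => hMx ((hM.dotProduct_mulVec_zero_iff x).mp hc)
  exact lt_of_le_of_ne h1 (Ne.symm h2)

lemma aux_posSemidef_smul_real {M : Matrix n n ℂ} (hM : M.PosSemidef) {a : ℝ} (ha : 0 ≤ a) :
    ((a : ℂ) • M).PosSemidef := by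
  refine Matrix.PosSemidef.of_dotProduct_mulVec_nonneg ?_ ?_
  · show ((a : ℂ) • M)ᴴ = (a : ℂ) • M
    rw [Matrix.conjTranspose_smul, hM.1.eq]
    congr 1
    exact Complex.conj_ofReal a
  · intro x
    rw [Matrix.smul_mulVec, dotProduct_smul, smul_eq_mul]
    exact mul_nonneg (by exact_mod_cast ha) (hM.dotProduct_mulVec_nonneg x)

lemma aux_posSemidef_sum {ι : Type*} (s : Finset ι) (f : ι → Matrix n n ℂ)
    (h : ∀ i ∈ s, (f i).PosSemidef) : (∑ i ∈ s, f i).PosSemidef := by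
  classical
  induction s using Finset.induction_on with
  | empty => simpa using (Matrix.PosSemidef.zero : (0 : Matrix n n ℂ).PosSemidef)
  | insert _ _ hni ih =>
    rw [Finset.sum_insert hni]
    exact (h _ (Finset.mem_insert_self _ _)).add
      (ih fun i hi => h i (Finset.mem_insert_of_mem hi))

/-- Klein-type inequality: `D(ρ‖σ) ≤ tr(ρ²σ⁻¹) - 1`. -/
lemma aux_klein {ρ σ : Matrix n n ℂ} (hρ : ρ.PosSemidef) (hρtr : ρ.trace = 1)
    (hσ : σ.PosDef) :
    qRelEntropy ρ σ ≤ ((ρ * ρ * σ⁻¹).trace).re - 1 := by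
  have hρH : ρ.IsHermitian := hρ.1
  have hσH : σ.IsHermitian := hσ.1
  set U : Matrix n n ℂ := (hρH.eigenvectorUnitary : Matrix n n ℂ) with hUdef
  set V : Matrix n n ℂ := (hσH.eigenvectorUnitary : Matrix n n ℂ) with hVdef
  set p := hρH.eigenvalues with hpdef
  set s := hσH.eigenvalues with hsdef
  have hU1 : star U * U = 1 := mem_unitaryGroup_iff'.mp hρH.eigenvectorUnitary.2
  have hU2 : U * star U = 1 := mem_unitaryGroup_iff.mp hρH.eigenvectorUnitary.2
  have hV1 : star V * V = 1 := mem_unitaryGroup_iff'.mp hσH.eigenvectorUnitary.2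
  have hV2 : V * star V = 1 := mem_unitaryGroup_iff.mp hσH.eigenvectorUnitary.2
  set N : Matrix n n ℂ := star U * V with hNdef
  have hNH : Nᴴ = star V * U := by
    rw [hNdef, ← Matrix.star_eq_conjTranspose, StarMul.star_mul, star_star]
  have hNN : N * Nᴴ = 1 := by
    rw [hNH, hNdef, Matrix.mul_assoc, ← Matrix.mul_assoc V, hV2, Matrix.one_mul, hU1]
  have hρspec : ρ = U * diagonal (RCLike.ofReal ∘ p) * star U := hρH.spectral_theorem
  have hσspec : σ = V * diagonal (RCLike.ofReal ∘ s) * star V := hσH.spectral_theorem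
  have hp0 : ∀ i, 0 ≤ p i := hρ.eigenvalues_nonneg
  have hs0 : ∀ j, 0 < s j := hσ.eigenvalues_pos
  have hσinv : σ⁻¹ = V * diagonal (RCLike.ofReal ∘ fun j => (s j)⁻¹) * star V := by
    apply Matrix.inv_eq_right_inv
    rw [hσspec, aux_conj_mul_conj V _ _ hV1, diagonal_mul_diagonal]
    have h1 : (fun i => (RCLike.ofReal ∘ s) i * (RCLike.ofReal ∘ fun j => (s j)⁻¹) i)
        = fun _ => (1 : ℂ) := by
      funext j
      simp only [Function.comp_apply, RCLike.ofReal_inv]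
      simp only [aux_rc_ofReal]
      exact mul_inv_cancel₀ (Complex.ofReal_ne_zero.mpr (hs0 j).ne')
    rw [h1, diagonal_one, Matrix.mul_one, hV2]
  set c : n → n → ℝ := fun i j => Complex.normSq (N i j) with hcdef
  have hc0 : ∀ i j, 0 ≤ c i j := fun i j => Complex.normSq_nonneg _
  have hrow : ∀ i, ∑ j, c i j = 1 := by
    intro i
    have h1 : (N * Nᴴ) i i = 1 := by rw [hNN]; simp [Matrix.one_apply]
    rw [Matrix.mul_apply] at h1
    have h2 : ∑ j, ((c i j : ℝ) : ℂ) = 1 := by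
      rw [← h1]
      refine Finset.sum_congr rfl fun j _ => ?_
      rw [Matrix.conjTranspose_apply, hcdef, RCLike.star_def, Complex.mul_conj]
    exact_mod_cast h2
  have hpsum : ∑ i, p i = 1 := by
    have h1 : ρ.trace = ∑ i, ((p i : ℝ) : ℂ) := by
      rw [hρspec, aux_trace_conj _ _ hU1, Matrix.trace_diagonal]
      rfl
    rw [hρtr] at h1
    exact_mod_cast h1.symm
  have e1 : (ρ * matLog ρ).trace = ((∑ i, p i * Real.log (p i) : ℝ) : ℂ) := by
    rw [aux_trace_mul_of_eq hρspec (aux_matLog_eq hρH), aux_conj_mul_conj _ _ _ hU1,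
      aux_trace_conj _ _ hU1, diagonal_mul_diagonal, Matrix.trace_diagonal]
    simp only [Function.comp_apply, aux_rc_ofReal, ← hsdef, ← hpdef]
    push_cast
    rfl
  have e2 : (ρ * matLog σ).trace
      = ((∑ i, ∑ j, p i * Real.log (s j) * c i j : ℝ) : ℂ) := by
    rw [aux_trace_mul_of_eq hρspec (aux_matLog_eq hσH), aux_trace_conj_mul_conj, ← hNdef,
      ← hNH, aux_trace_DND]
    push_cast
    refine Finset.sum_congr rfl fun i _ => Finset.sum_congr rfl fun j _ => ?_
    rw [RCLike.star_def, Complex.mul_conj]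
    simp only [Function.comp_apply, aux_rc_ofReal, ← hsdef, ← hpdef]
    try push_cast
    try ring
  have e3 : (ρ * ρ * σ⁻¹).trace
      = ((∑ i, ∑ j, p i * p i * (s j)⁻¹ * c i j : ℝ) : ℂ) := by
    rw [aux_trace_mul3_of_eq hρspec hσinv]
    rw [aux_conj_mul_conj _ _ _ hU1, diagonal_mul_diagonal, aux_trace_conj_mul_conj, ← hNdef,
      ← hNH, aux_trace_DND]
    push_cast
    refine Finset.sum_congr rfl fun i _ => Finset.sum_congr rfl fun j _ => ?_
    rw [RCLike.star_def, Complex.mul_conj]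
    simp only [Function.comp_apply, aux_rc_ofReal, ← hsdef, ← hpdef]
    try push_cast
    try ring
  rw [qRelEntropy, Matrix.mul_sub, Matrix.trace_sub, e1, e2, e3]
  rw [Complex.sub_re, Complex.ofReal_re, Complex.ofReal_re, Complex.ofReal_re]
  have key : ∀ i j, p i * Real.log (p i) * c i j - p i * Real.log (s j) * c i j
      ≤ p i * p i * (s j)⁻¹ * c i j - p i * c i j := by
    intro i j
    rcases eq_or_lt_of_le (hp0 i) with h0 | h0
    · simp [← h0]
    · have hdiv : 0 < p i / s j := div_pos h0 (hs0 j)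
      have hlog : Real.log (p i / s j) ≤ p i / s j - 1 := Real.log_le_sub_one_of_pos hdiv
      rw [Real.log_div h0.ne' (hs0 j).ne'] at hlog
      have hstep := mul_le_mul_of_nonneg_right
        (mul_le_mul_of_nonneg_left hlog (le_of_lt h0)) (hc0 i j)
      calc p i * Real.log (p i) * c i j - p i * Real.log (s j) * c i j
          = p i * (Real.log (p i) - Real.log (s j)) * c i j := by ring
        _ ≤ p i * (p i / s j - 1) * c i j := hstep
        _ = p i * p i * (s j)⁻¹ * c i j - p i * c i j := by
            field_simp
  have hL : ∑ i, p i * Real.log (p i) = ∑ i, ∑ j, p i * Real.log (p i) * c i j := by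
    refine Finset.sum_congr rfl fun i _ => ?_
    rw [← Finset.mul_sum, hrow i, mul_one]
  have hR : (1 : ℝ) = ∑ i, ∑ j, p i * c i j := by
    rw [← hpsum]
    refine Finset.sum_congr rfl fun i _ => ?_
    rw [← Finset.mul_sum, hrow i, mul_one]
  rw [hL]
  calc (∑ i, ∑ j, p i * Real.log (p i) * c i j) - ∑ i, ∑ j, p i * Real.log (s j) * c i j
      = ∑ i, ∑ j, (p i * Real.log (p i) * c i j - p i * Real.log (s j) * c i j) := by
        rw [← Finset.sum_sub_distrib]
        exact Finset.sum_congr rfl fun i _ => (Finset.sum_sub_distrib _ _).symm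
    _ ≤ ∑ i, ∑ j, (p i * p i * (s j)⁻¹ * c i j - p i * c i j) := by
        refine Finset.sum_le_sum fun i _ => Finset.sum_le_sum fun j _ => key i j
    _ = (∑ i, ∑ j, p i * p i * (s j)⁻¹ * c i j) - 1 := by
        rw [hR, ← Finset.sum_sub_distrib]
        exact Finset.sum_congr rfl fun i _ => Finset.sum_sub_distrib _ _

end AuxKlein

section AuxTensor
variable {q d : ℕ}

lemma tensorFam_mul (A B : Fin q → Matrix (Fin d) (Fin d) ℂ) :
    tensorFam A * tensorFam B = tensorFam (fun t => A t * B t) := by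
  ext i j
  simp only [tensorFam, Matrix.mul_apply, Matrix.of_apply]
  rw [Finset.prod_univ_sum, Fintype.piFinset_univ]
  exact Finset.sum_congr rfl fun k _ => (Finset.prod_mul_distrib).symm

lemma tensorFam_trace (A : Fin q → Matrix (Fin d) (Fin d) ℂ) :
    (tensorFam A).trace = ∏ t, (A t).trace := by
  simp only [Matrix.trace, Matrix.diag_apply, tensorFam, Matrix.of_apply]
  rw [Finset.prod_univ_sum, Fintype.piFinset_univ]

lemma tensorFam_conjT (A : Fin q → Matrix (Fin d) (Fin d) ℂ) :
    (tensorFam A)ᴴ = tensorFam (fun t => (A t)ᴴ) := by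
  ext i j
  simp only [tensorFam, Matrix.conjTranspose_apply, Matrix.of_apply]
  exact star_prod _ _

lemma tensorFam_one :
    tensorFam (fun _ : Fin q => (1 : Matrix (Fin d) (Fin d) ℂ)) = 1 := by
  ext i j
  simp only [tensorFam, Matrix.of_apply, Matrix.one_apply, Finset.prod_boole]
  by_cases h : i = j
  · simp [h]
  · have h2 : ¬ (∀ t ∈ Finset.univ, i t = j t) := by
      intro hall
      exact h (funext fun t => hall t (Finset.mem_univ t))
    rw [if_neg h2, if_neg h]

open scoped MatrixOrder Matrix.Norms.L2Operator in
lemma tensorFam_posSemidef (A : Fin q → Matrix (Fin d) (Fin d) ℂ)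
    (hA : ∀ t, (A t).PosSemidef) : (tensorFam A).PosSemidef := by
  choose B hB using fun t => CStarAlgebra.nonneg_iff_eq_star_mul_self.mp (hA t).nonneg
  have hfun : (fun t => (B t)ᴴ * B t) = A := by
    funext t
    rw [hB t]
    rfl
  have hps := Matrix.posSemidef_conjTranspose_mul_self (tensorFam fun t => B t)
  rw [tensorFam_conjT, tensorFam_mul] at hps
  rw [show tensorFam A = tensorFam fun t => (B t)ᴴ * B t from
    congrArg tensorFam hfun.symm]
  exact hps

end AuxTensor

set_option maxHeartbeats 1000000 in
/-- bound `tr(ρ̄² ρ0⁻¹) ≤ d/λ`. -/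
lemma aux_Tbound {d : ℕ} {ρ0 ρbar : Matrix (Fin d) (Fin d) ℂ} (hρ0pd : ρ0.PosDef)
    (hρbarpsd : ρbar.PosSemidef) (hρbartr : ρbar.trace = 1) {lam : ℝ} (hlam : 0 < lam)
    (hmin : ∀ i, lam ≤ hρ0pd.1.eigenvalues i) :
    ((ρbar * ρbar * ρ0⁻¹).trace).re ≤ d / lam := by
  have hd : (1 : ℝ) ≤ d := by
    rcases Nat.eq_zero_or_pos d with h0 | h1
    · subst h0
      have := hρbartr
      rw [Matrix.trace] at this
      simp at this
    · exact_mod_cast h1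
  set W : Matrix (Fin d) (Fin d) ℂ := (hρ0pd.1.eigenvectorUnitary : Matrix (Fin d) (Fin d) ℂ)
    with hWdef
  set μ := hρ0pd.1.eigenvalues with hμdef
  have hW1 : star W * W = 1 := mem_unitaryGroup_iff'.mp hρ0pd.1.eigenvectorUnitary.2
  have hW2 : W * star W = 1 := mem_unitaryGroup_iff.mp hρ0pd.1.eigenvectorUnitary.2
  have hμpos : ∀ i, 0 < μ i := hρ0pd.eigenvalues_pos
  have hspec : ρ0 = W * diagonal (RCLike.ofReal ∘ μ) * star W := hρ0pd.1.spectral_theorem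
  have hinv : ρ0⁻¹ = W * diagonal (RCLike.ofReal ∘ fun j => (μ j)⁻¹) * star W := by
    apply Matrix.inv_eq_right_inv
    rw [hspec, aux_conj_mul_conj W _ _ hW1, diagonal_mul_diagonal]
    have h1 : (fun i => (RCLike.ofReal ∘ μ) i * (RCLike.ofReal ∘ fun j => (μ j)⁻¹) i)
        = fun _ => (1 : ℂ) := by
      funext j
      simp only [Function.comp_apply, RCLike.ofReal_inv]
      simp only [aux_rc_ofReal]
      exact mul_inv_cancel₀ (Complex.ofReal_ne_zero.mpr (hμpos j).ne')
    rw [h1, diagonal_one, Matrix.mul_one, hW2]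
  have key1 : (ρbar * ρbar * ρ0⁻¹).trace
      = ((star W * (ρbar * ρbar) * W) * diagonal (RCLike.ofReal ∘ fun j => (μ j)⁻¹)).trace := by
    rw [hinv]
    exact aux_trace_mul_conjdiag _ _ _
  set P := star W * (ρbar * ρbar) * W with hPdef
  have hPpsd : P.PosSemidef := by
    have h2 : (ρbar * ρbar).PosSemidef := by
      have h3 := Matrix.posSemidef_conjTranspose_mul_self ρbar
      rwa [hρbarpsd.1.eq] at h3
    have h4 := h2.conjTranspose_mul_mul_same W
    rwa [← Matrix.star_eq_conjTranspose] at h4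
  have hPdiag : ∀ j, 0 ≤ (P j j).re := by
    intro j
    have h5 := hPpsd.dotProduct_mulVec_nonneg (Pi.single j 1)
    have h6 : star (Pi.single j 1 : Fin d → ℂ) ⬝ᵥ P *ᵥ Pi.single j 1 = P j j := by
      simp [Matrix.mulVec_single, dotProduct, Pi.single_apply, apply_ite]
    rw [h6] at h5
    exact (Complex.le_def.mp h5).1
  have hPtr : P.trace = (ρbar * ρbar).trace := by
    rw [hPdef, Matrix.trace_mul_comm, ← Matrix.mul_assoc, hW2, Matrix.one_mul]
  have htr2 : ((ρbar * ρbar).trace).re ≤ 1 := by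
    have hRH : ρbar.IsHermitian := hρbarpsd.1
    set Ur : Matrix (Fin d) (Fin d) ℂ := (hRH.eigenvectorUnitary : Matrix (Fin d) (Fin d) ℂ)
      with hUrdef
    set r := hRH.eigenvalues with hrdef
    have hU1' : star Ur * Ur = 1 := mem_unitaryGroup_iff'.mp hRH.eigenvectorUnitary.2
    have hspec' : ρbar = Ur * diagonal (RCLike.ofReal ∘ r) * star Ur := hRH.spectral_theorem
    have hr0 : ∀ i, 0 ≤ r i := hρbarpsd.eigenvalues_nonneg
    have hrsum : ∑ i, r i = 1 := by
      have h1 : ρbar.trace = ∑ i, ((r i : ℝ) : ℂ) := by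
        rw [hspec', aux_trace_conj _ _ hU1', Matrix.trace_diagonal]
        rfl
      rw [hρbartr] at h1
      exact_mod_cast h1.symm
    have e : (ρbar * ρbar).trace = ∑ i, ((r i : ℂ) * (r i : ℂ)) := by
      rw [aux_trace_mul_of_eq hspec' hspec', aux_conj_mul_conj _ _ _ hU1',
        aux_trace_conj _ _ hU1', diagonal_mul_diagonal, Matrix.trace_diagonal]
      simp only [Function.comp_apply, aux_rc_ofReal]
    rw [e, Complex.re_sum]
    have hterm : ∀ i, ((r i : ℂ) * (r i : ℂ)).re = r i * r i := fun i => by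
      rw [← Complex.ofReal_mul, Complex.ofReal_re]
    calc ∑ i, ((r i : ℂ) * (r i : ℂ)).re = ∑ i, r i * r i :=
          Finset.sum_congr rfl fun i _ => hterm i
      _ ≤ ∑ i, r i := by
          refine Finset.sum_le_sum fun i _ => ?_
          have hri : r i ≤ 1 := by
            rw [← hrsum]
            exact Finset.single_le_sum (fun j _ => hr0 j) (Finset.mem_univ i)
          nlinarith [hr0 i]
      _ = 1 := hrsum
  have e7 : ((ρbar * ρbar * ρ0⁻¹).trace).re = ∑ j, (P j j).re * (μ j)⁻¹ := by
    rw [key1]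
    have hstep : (P * diagonal (RCLike.ofReal ∘ fun j => (μ j)⁻¹)).trace
        = ∑ j, P j j * (((μ j)⁻¹ : ℝ) : ℂ) := by
      simp only [Matrix.trace, Matrix.diag_apply]
      refine Finset.sum_congr rfl fun j _ => ?_
      rw [Matrix.mul_diagonal]
      simp only [Function.comp_apply, aux_rc_ofReal]
    rw [hstep, Complex.re_sum]
    refine Finset.sum_congr rfl fun j _ => ?_
    simp [Complex.mul_re]
  rw [e7]
  calc ∑ j, (P j j).re * (μ j)⁻¹
      ≤ ∑ j, (P j j).re * lam⁻¹ := by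
        refine Finset.sum_le_sum fun j _ => ?_
        refine mul_le_mul_of_nonneg_left ?_ (hPdiag j)
        exact inv_anti₀ hlam (hmin j)
    _ = (P.trace).re * lam⁻¹ := by
        rw [← Finset.sum_mul]
        congr 1
        rw [Matrix.trace, Complex.re_sum]
        rfl
    _ ≤ 1 * lam⁻¹ := by
        refine mul_le_mul_of_nonneg_right ?_ (inv_nonneg.mpr hlam.le)
        rw [hPtr]
        exact htr2
    _ ≤ d / lam := by
        rw [one_mul, div_eq_mul_inv]
        exact le_mul_of_one_le_left (inv_nonneg.mpr hlam.le) hd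


set_option maxHeartbeats 400000 in
/-- relative-entropy (covertness) bound for the uniform mixture of the
PPM states `ρ(j)` with respect to `ρ0^{⊗q}`. -/
theorem stmt11 {d q : ℕ} (hq : 1 ≤ q) (ρ0 ρbar : Matrix (Fin d) (Fin d) ℂ)
    (hρ0 : IsDensity ρ0) (hρ0pd : ρ0.PosDef) (hρbar : IsDensity ρbar) :
    qRelEntropy
        (((q : ℂ))⁻¹ • ∑ j : Fin q, tensorFam fun t => if t = j then ρbar else ρ0)
        (tensorFam fun _ => ρ0) ≤
      ((q : ℝ))⁻¹ * (((ρbar * ρbar * ρ0⁻¹).trace).re - 1) ∧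
    ∀ lam : ℝ, 0 < lam → lam ≤ eigMin hρ0pd.1 →
      qRelEntropy
          (((q : ℂ))⁻¹ • ∑ j : Fin q, tensorFam fun t => if t = j then ρbar else ρ0)
          (tensorFam fun _ => ρ0) ≤
        ((q : ℝ))⁻¹ * ((d : ℝ) / lam - 1) := by
  classical
  have hqC : ((q : ℂ)) ≠ 0 := Nat.cast_ne_zero.mpr (Nat.one_le_iff_ne_zero.mp hq)
  have hqR : (0 : ℝ) < q := by exact_mod_cast hq
  have hρ0det : IsUnit ρ0.det := (Matrix.isUnit_iff_isUnit_det _).mp hρ0pd.isUnit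
  have hinv1 : ρ0 * ρ0⁻¹ = 1 := Matrix.mul_nonsing_inv _ hρ0det
  have hinv2 : ρ0⁻¹ * ρ0 = 1 := Matrix.nonsing_inv_mul _ hρ0det
  set ρj : Fin q → Matrix (Fin q → Fin d) (Fin q → Fin d) ℂ :=
    fun j => tensorFam fun t => if t = j then ρbar else ρ0 with hρjdef
  set σ : Matrix (Fin q → Fin d) (Fin q → Fin d) ℂ := tensorFam fun _ => ρ0 with hσdef
  set T : ℂ := (ρbar * ρbar * ρ0⁻¹).trace with hTdef
  -- σ is positive definite
  have hσpsd : σ.PosSemidef := tensorFam_posSemidef _ (fun _ => hρ0pd.posSemidef)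
  have hστ : σ * tensorFam (fun _ : Fin q => ρ0⁻¹) = 1 := by
    rw [hσdef, tensorFam_mul]
    have h1 : (fun t : Fin q => ρ0 * ρ0⁻¹) = fun _ => (1 : Matrix (Fin d) (Fin d) ℂ) :=
      funext fun _ => hinv1
    rw [h1, tensorFam_one]
  have hσpd : σ.PosDef := aux_posDef_of_mul_eq_one hσpsd hστ
  have hσinv : σ⁻¹ = tensorFam (fun _ : Fin q => ρ0⁻¹) := Matrix.inv_eq_right_inv hστ
  -- the mixture is a density matrix
  have hρjpsd : ∀ j, (ρj j).PosSemidef := by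
    intro j
    refine tensorFam_posSemidef _ (fun t => ?_)
    split
    · exact hρbar.1
    · exact hρ0pd.posSemidef
  have hρjtr : ∀ j, (ρj j).trace = 1 := by
    intro j
    rw [hρjdef]
    rw [tensorFam_trace]
    refine Finset.prod_eq_one fun t _ => ?_
    split
    · exact hρbar.2
    · exact hρ0.2
  set S : Matrix (Fin q → Fin d) (Fin q → Fin d) ℂ := ∑ j, ρj j with hSdef
  set ρhat : Matrix (Fin q → Fin d) (Fin q → Fin d) ℂ := ((q : ℂ))⁻¹ • S with hρhatdef
  have hρhatpsd : ρhat.PosSemidef := by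
    have hSpsd : S.PosSemidef := aux_posSemidef_sum _ _ (fun j _ => hρjpsd j)
    have hcast : ((q : ℂ))⁻¹ = (((q : ℝ)⁻¹ : ℝ) : ℂ) := by push_cast; ring
    rw [hρhatdef, hcast]
    exact aux_posSemidef_smul_real hSpsd (inv_nonneg.mpr hqR.le)
  have hρhattr : ρhat.trace = 1 := by
    rw [hρhatdef, Matrix.trace_smul, hSdef, Matrix.trace_sum]
    simp only [hρjtr]
    rw [Finset.sum_const, Finset.card_univ, Fintype.card_fin, nsmul_eq_mul, mul_one,
      smul_eq_mul, inv_mul_cancel₀ hqC]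
  -- trace identity
  have key : ∀ j k : Fin q, (ρj j * ρj k * σ⁻¹).trace = if j = k then T else 1 := by
    intro j k
    rw [hσinv, hρjdef]
    dsimp only
    rw [tensorFam_mul, tensorFam_mul, tensorFam_trace]
    by_cases hjk : j = k
    · subst hjk
      rw [if_pos rfl]
      rw [Finset.prod_eq_single j ?h₀ ?h₁]
      case h₀ =>
        intro t _ ht
        rw [if_neg ht, Matrix.mul_assoc, hinv1, Matrix.mul_one]
        exact hρ0.2
      case h₁ => intro h; exact absurd (Finset.mem_univ j) h
      rw [if_pos rfl, ← hTdef]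
    · rw [if_neg hjk]
      refine Finset.prod_eq_one fun t _ => ?_
      by_cases htj : t = j
      · subst htj
        rw [if_pos rfl, if_neg hjk, Matrix.mul_assoc, hinv1, Matrix.mul_one]
        exact hρbar.2
      · by_cases htk : t = k
        · subst htk
          rw [if_neg htj, if_pos rfl, Matrix.trace_mul_cycle, hinv2, Matrix.one_mul]
          exact hρbar.2
        · rw [if_neg htj, if_neg htk, Matrix.mul_assoc, hinv1, Matrix.mul_one]
          exact hρ0.2
  have traceEq : (ρhat * ρhat * σ⁻¹).trace = ((q : ℂ))⁻¹ * (T - 1) + 1 := by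
    have h1 : ρhat * ρhat * σ⁻¹ = (((q : ℂ))⁻¹ * ((q : ℂ))⁻¹) • (S * S * σ⁻¹) := by
      rw [hρhatdef]
      calc ((q : ℂ))⁻¹ • S * (((q : ℂ))⁻¹ • S) * σ⁻¹
          = (((q : ℂ))⁻¹ • (((q : ℂ))⁻¹ • (S * S))) * σ⁻¹ := by
            rw [smul_mul_assoc, mul_smul_comm]
        _ = (((q : ℂ))⁻¹ * ((q : ℂ))⁻¹) • (S * S * σ⁻¹) := by
            rw [smul_smul, smul_mul_assoc]
    have h2 : (S * S * σ⁻¹).trace = (q : ℂ) * (T - 1 + q) := by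
      rw [hSdef, Finset.sum_mul_sum]
      rw [Finset.sum_mul]
      simp only [Finset.sum_mul]
      rw [Matrix.trace_sum]
      simp only [Matrix.trace_sum]
      simp only [key]
      have hinner : ∀ j : Fin q, (∑ k, if j = k then T else (1 : ℂ)) = T - 1 + q := by
        intro j
        have hsplit : ∀ k : Fin q, (if j = k then T else (1 : ℂ))
            = (if j = k then T - 1 else 0) + 1 := by
          intro k; split <;> ring
        rw [Finset.sum_congr rfl fun k _ => hsplit k, Finset.sum_add_distrib,
          Finset.sum_ite_eq, if_pos (Finset.mem_univ j), Finset.sum_const,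
          Finset.card_univ, Fintype.card_fin, nsmul_eq_mul, mul_one]
      rw [Finset.sum_congr rfl fun j _ => hinner j, Finset.sum_const, Finset.card_univ,
        Fintype.card_fin, nsmul_eq_mul]
    rw [h1, Matrix.trace_smul, smul_eq_mul, h2]
    field_simp
  -- first bound
  have hmain : qRelEntropy ρhat σ ≤ ((q : ℝ))⁻¹ * (T.re - 1) := by
    have hb := aux_klein hρhatpsd hρhattr hσpd
    have hre : ((ρhat * ρhat * σ⁻¹).trace).re - 1 = ((q : ℝ))⁻¹ * (T.re - 1) := by
      rw [traceEq]
      have hcast : ((q : ℂ))⁻¹ = (((q : ℝ)⁻¹ : ℝ) : ℂ) := by push_cast; ring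
      rw [hcast, Complex.add_re, Complex.re_ofReal_mul, Complex.sub_re, Complex.one_re]
      ring
    rw [← hre]
    exact hb
  refine ⟨hmain, ?_⟩
  intro lam hlam hlam2
  have hmin : ∀ i, lam ≤ hρ0pd.1.eigenvalues i := by
    intro i
    refine le_trans hlam2 ?_
    exact ciInf_le (Set.Finite.bddBelow (Set.finite_range _)) i
  have hT := aux_Tbound hρ0pd hρbar.1 hρbar.2 hlam hmin
  refine le_trans hmain ?_
  refine mul_le_mul_of_nonneg_left ?_ (inv_nonneg.mpr hqR.le)
  have : T.re = ((ρbar * ρbar * ρ0⁻¹).trace).re := by rw [hTdef]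
  linarith [hT, this]
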